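/- For all real numbers a, b and every σ > 0, the total variation distance between the Gaussian measures N(a,σ²) and N(b,σ²) equals erf(|a−b|/(2√2·σ)), where the total variation distance between probability measures μ and ν on ℝ is sup_{A measurable} |μ(A) − ν(A)|. -/

import Mathlib

open MeasureTheory ProbabilityTheory

/-- `erf(x)`: the probability that a centered Gaussian of variance `1/2` lies in `[−x,x]`,
i.e. `(2/√π)∫₀ˣ e^{−u²} du`. -/
noncomputable def erf (x : ℝ) : ℝ := 2 / Real.sqrt Real.pi * ∫ u in (0 : ℝ)..x, Real.exp (-u ^ 2)

section Aux
open Real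

lemma gauss_symm_integral (σ : ℝ) (hσ : 0 < σ) (a d : ℝ) (hd : 0 ≤ d) :
    ∫ x in Set.Ioc (a - d) (a + d), gaussianPDFReal a (σ ^ 2).toNNReal x
      = erf (d / (Real.sqrt 2 * σ)) := by
  have hv : ((σ ^ 2).toNNReal : ℝ) = σ ^ 2 := Real.coe_toNNReal _ (by positivity)
  have h1 : ∫ x in Set.Ioc (a - d) (a + d), gaussianPDFReal a (σ ^ 2).toNNReal x
      = ∫ x in (a - d)..(a + d), gaussianPDFReal a (σ ^ 2).toNNReal x := by
    rw [intervalIntegral.integral_of_le (by linarith)]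
  rw [h1]
  have hs2 : (0:ℝ) < Real.sqrt 2 := by positivity
  have hc : Real.sqrt 2 * σ ≠ 0 := by positivity
  have hpdf : ∀ x : ℝ, gaussianPDFReal a (σ ^ 2).toNNReal x
      = (Real.sqrt (2 * π) * σ)⁻¹ * Real.exp (-(((x - a) / (Real.sqrt 2 * σ)) ^ 2)) := by
    intro x
    rw [gaussianPDFReal]
    have e1 : Real.sqrt (2 * π * ((σ ^ 2).toNNReal : ℝ)) = Real.sqrt (2 * π) * σ := by
      rw [hv, Real.sqrt_mul (by positivity), Real.sqrt_sq hσ.le]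
    have e2 : -(x - a) ^ 2 / (2 * ((σ ^ 2).toNNReal : ℝ))
        = -(((x - a) / (Real.sqrt 2 * σ)) ^ 2) := by
      rw [hv, div_pow, mul_pow, Real.sq_sqrt (by norm_num : (0:ℝ) ≤ 2)]
      field_simp
    rw [e1, e2]
  simp only [hpdf]
  rw [intervalIntegral.integral_const_mul]
  have h2 : ∫ x in (a - d)..(a + d), Real.exp (-(((x - a) / (Real.sqrt 2 * σ)) ^ 2))
      = ∫ x in (-d)..d, Real.exp (-((x / (Real.sqrt 2 * σ)) ^ 2)) := by
    rw [intervalIntegral.integral_comp_sub_right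
      (fun x => Real.exp (-((x / (Real.sqrt 2 * σ)) ^ 2))) a]
    congr 1 <;> ring
  rw [h2]
  rw [intervalIntegral.integral_comp_div (fun u => Real.exp (-(u ^ 2))) hc]
  set c := d / (Real.sqrt 2 * σ) with hcdef
  have hneg : (-d) / (Real.sqrt 2 * σ) = -c := by rw [hcdef]; ring
  rw [hneg]
  have hint : ∀ (u v : ℝ), IntervalIntegrable (fun u : ℝ => Real.exp (-(u ^ 2))) volume u v :=
    fun u v => (Continuous.intervalIntegrable (by continuity) u v)
  have h3 : ∫ u in (-c)..c, Real.exp (-(u ^ 2))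
      = 2 * ∫ u in (0:ℝ)..c, Real.exp (-(u ^ 2)) := by
    rw [← intervalIntegral.integral_add_adjacent_intervals (hint (-c) 0) (hint 0 c)]
    have hh : ∫ u in (-c)..(0:ℝ), Real.exp (-(u ^ 2)) = ∫ u in (0:ℝ)..c, Real.exp (-(u ^ 2)) := by
      have h := intervalIntegral.integral_comp_neg (fun u : ℝ => Real.exp (-(u ^ 2))) (a := 0) (b := c)
      simpa using h.symm
    rw [hh]; ring
  rw [h3, erf]
  have hπ : Real.sqrt (2 * π) = Real.sqrt 2 * Real.sqrt π := Real.sqrt_mul (by norm_num) _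
  have hπ0 : (0:ℝ) < Real.sqrt π := Real.sqrt_pos.mpr Real.pi_pos
  simp only [smul_eq_mul]
  rw [hπ]
  field_simp


variable {σ : ℝ}

lemma hvne (hσ : 0 < σ) : (σ ^ 2).toNNReal ≠ 0 :=
  ne_of_gt (Real.toNNReal_pos.mpr (by positivity))

lemma gauss_apply_toReal (m : ℝ) (hσ : 0 < σ) (A : Set ℝ) :
    ((gaussianReal m (σ ^ 2).toNNReal) A).toReal
      = ∫ x in A, gaussianPDFReal m (σ ^ 2).toNNReal x := by
  rw [gaussianReal_apply_eq_integral _ (hvne hσ) A,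
    ENNReal.toReal_ofReal (integral_nonneg fun x => gaussianPDFReal_nonneg _ _ _)]

lemma pdf_le_pdf (a b x : ℝ) (hσ : 0 < σ) (h : (x - a) ^ 2 ≤ (x - b) ^ 2) :
    gaussianPDFReal b (σ ^ 2).toNNReal x ≤ gaussianPDFReal a (σ ^ 2).toNNReal x := by
  have hv : ((σ ^ 2).toNNReal : ℝ) = σ ^ 2 := Real.coe_toNNReal _ (by positivity)
  rw [gaussianPDFReal, gaussianPDFReal]
  have hC : (0:ℝ) ≤ (Real.sqrt (2 * π * ((σ ^ 2).toNNReal : ℝ)))⁻¹ := by positivity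
  apply mul_le_mul_of_nonneg_left _ hC
  apply Real.exp_le_exp.mpr
  rw [hv]
  gcongr

lemma tv_lt (a b : ℝ) (hσ : 0 < σ) (hab : b < a) :
    (⨆ A : {A : Set ℝ // MeasurableSet A},
        |((gaussianReal a (σ ^ 2).toNNReal) (A : Set ℝ)).toReal
          - ((gaussianReal b (σ ^ 2).toNNReal) (A : Set ℝ)).toReal|)
      = erf ((a - b) / (2 * Real.sqrt 2 * σ)) := by
  set v := (σ ^ 2).toNNReal with hv
  set f := gaussianPDFReal a v with hf
  set g := gaussianPDFReal b v with hg
  set m := (a + b) / 2 with hm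
  set d := (a - b) / 2 with hd
  have hd0 : 0 < d := by rw [hd]; linarith
  have hm' : m = a - d := by rw [hm, hd]; ring
  have hfint : Integrable f := integrable_gaussianPDFReal a v
  have hgint : Integrable g := integrable_gaussianPDFReal b v
  have hsub : Integrable (fun x => f x - g x) := hfint.sub hgint
  have hsub' : Integrable (fun x => g x - f x) := hgint.sub hfint
  have hge : ∀ x ∈ Set.Ioi m, 0 ≤ f x - g x := by
    intro x hx
    have hx' : m < x := hx
    have := pdf_le_pdf a b x hσ (by nlinarith)
    linarith
  have hle : ∀ x ∈ Set.Iic m, f x - g x ≤ 0 := by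
    intro x hx
    have hx' : x ≤ m := hx
    have := pdf_le_pdf b a x hσ (by nlinarith)
    linarith
  set V := ∫ x in Set.Ioi m, (f x - g x) with hV
  have hV0 : 0 ≤ V := setIntegral_nonneg measurableSet_Ioi hge
  have htot : ∫ x, (f x - g x) = 0 := by
    rw [integral_sub hfint hgint, hf, hg,
      integral_gaussianPDFReal_eq_one a (hvne hσ),
      integral_gaussianPDFReal_eq_one b (hvne hσ), sub_self]
  have hsplit : (∫ x in Set.Iic m, (f x - g x)) + V = 0 := by
    rw [hV, intervalIntegral.integral_Iic_add_Ioi hsub.integrableOn hsub.integrableOn, htot]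
  have hbound : ∀ (A : Set ℝ), MeasurableSet A →
      |((gaussianReal a v) A).toReal - ((gaussianReal b v) A).toReal| ≤ V := by
    intro A hA
    rw [gauss_apply_toReal a hσ A, gauss_apply_toReal b hσ A,
      ← integral_sub hfint.integrableOn hgint.integrableOn]
    have hAsplit : ∫ x in A, (f x - g x)
        = (∫ x in A ∩ Set.Ioi m, (f x - g x)) + ∫ x in A ∩ Set.Iic m, (f x - g x) := by
      rw [← setIntegral_union (Set.disjoint_left.mpr fun x hx1 hx2 =>
            absurd hx2.2 (not_le.mpr (Set.mem_Ioi.mp hx1.2))) (hA.inter measurableSet_Iic)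
          hsub.integrableOn hsub.integrableOn]
      congr 1
      rw [← Set.inter_union_distrib_left, Set.union_comm (Set.Ioi m), Set.Iic_union_Ioi, Set.inter_univ]
    have key1 : ∫ x in A ∩ Set.Ioi m, (f x - g x) ≤ V :=
      setIntegral_mono_set hsub.integrableOn
        ((ae_restrict_iff' measurableSet_Ioi).mpr (ae_of_all _ hge))
        (HasSubset.Subset.eventuallyLE Set.inter_subset_right)
    have key2 : ∫ x in A ∩ Set.Iic m, (f x - g x) ≤ 0 :=
      setIntegral_nonpos (hA.inter measurableSet_Iic) fun x hx => hle x hx.2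
    have key3 : 0 ≤ ∫ x in A ∩ Set.Ioi m, (f x - g x) :=
      setIntegral_nonneg (hA.inter measurableSet_Ioi) fun x hx => hge x hx.2
    have eneg : ∀ s : Set ℝ, ∫ x in s, (g x - f x) = - ∫ x in s, (f x - g x) := by
      intro s
      rw [← integral_neg]
      simp only [neg_sub]
    have key4 : ∫ x in Set.Iic m, (f x - g x) ≤ ∫ x in A ∩ Set.Iic m, (f x - g x) := by
      have h5 : ∫ x in A ∩ Set.Iic m, (g x - f x) ≤ ∫ x in Set.Iic m, (g x - f x) :=
        setIntegral_mono_set hsub'.integrableOn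
          ((ae_restrict_iff' measurableSet_Iic).mpr (ae_of_all _ fun x hx => by
            have h6 := hle x hx; show (0:ℝ) ≤ g x - f x; linarith))
          (HasSubset.Subset.eventuallyLE Set.inter_subset_right)
      rw [eneg, eneg] at h5
      linarith
    rw [abs_le]
    constructor <;> [linarith; linarith]
  have hIoi : ((gaussianReal a v) (Set.Ioi m)).toReal
      - ((gaussianReal b v) (Set.Ioi m)).toReal = V := by
    rw [gauss_apply_toReal a hσ, gauss_apply_toReal b hσ,
      ← integral_sub hfint.integrableOn hgint.integrableOn, hV]
  have hmap : (gaussianReal b v) (Set.Ioi m) = (gaussianReal a v) (Set.Ioi (a + d)) := by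
    have h1 : gaussianReal b v = (gaussianReal a v).map (· + (b - a)) := by
      rw [gaussianReal_map_add_const]
      congr 1
      ring
    rw [h1, Measure.map_apply (measurable_add_const _) measurableSet_Ioi]
    congr 1
    ext x
    simp only [Set.mem_preimage, Set.mem_Ioi, hm, hd]
    constructor <;> intro h <;> linarith
  have hunion : Set.Ioc (a - d) (a + d) ∪ Set.Ioi (a + d) = Set.Ioi (a - d) :=
    Set.Ioc_union_Ioi_eq_Ioi (by linarith)
  have hmeas_add : (gaussianReal a v) (Set.Ioi (a - d))
      = (gaussianReal a v) (Set.Ioc (a - d) (a + d)) + (gaussianReal a v) (Set.Ioi (a + d)) := by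
    rw [← hunion]
    exact measure_union (Set.disjoint_left.mpr fun x hx1 hx2 =>
      absurd hx1.2 (not_le.mpr hx2)) measurableSet_Ioi
  have hVval : V = ((gaussianReal a v) (Set.Ioc (a - d) (a + d))).toReal := by
    rw [hV, integral_sub hfint.integrableOn hgint.integrableOn,
      ← gauss_apply_toReal a hσ, ← gauss_apply_toReal b hσ, hmap, hm', hmeas_add,
      ENNReal.toReal_add (measure_ne_top _ _) (measure_ne_top _ _)]
    ring
  have hVerf : V = erf ((a - b) / (2 * Real.sqrt 2 * σ)) := by
    have harg : d / (Real.sqrt 2 * σ) = (a - b) / (2 * Real.sqrt 2 * σ) := by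
      rw [hd]
      ring
    rw [hVval, gauss_apply_toReal a hσ, gauss_symm_integral σ hσ a d hd0.le, harg]
  apply le_antisymm
  · exact ciSup_le fun A => (hbound A.1 A.2).trans_eq hVerf
  · refine le_ciSup_of_le ⟨V, ?_⟩ ⟨Set.Ioi m, measurableSet_Ioi⟩ ?_
    · rintro x ⟨A, rfl⟩
      exact hbound A.1 A.2
    · show erf ((a - b) / (2 * Real.sqrt 2 * σ))
        ≤ |((gaussianReal a v) (Set.Ioi m)).toReal - ((gaussianReal b v) (Set.Ioi m)).toReal|
      rw [hIoi, ← hVerf, abs_of_nonneg hV0]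


end Aux

/-- The total-variation distance between `N(a,σ²)` and `N(b,σ²)` equals `erf(|a−b|/(2√2σ))`,
where the total-variation distance is the supremum over measurable sets `A` of
`|μ(A) − ν(A)|`. -/
theorem gaussian_total_variation (a b σ : ℝ) (hσ : 0 < σ) :
    (⨆ A : {A : Set ℝ // MeasurableSet A},
        |((gaussianReal a (σ ^ 2).toNNReal) (A : Set ℝ)).toReal
          - ((gaussianReal b (σ ^ 2).toNNReal) (A : Set ℝ)).toReal|)
      = erf (|a - b| / (2 * Real.sqrt 2 * σ)) := by
  rcases lt_trichotomy a b with h | h | h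
  · rw [abs_of_neg (show a - b < 0 by linarith), show -(a - b) = b - a from by ring]
    calc (⨆ A : {A : Set ℝ // MeasurableSet A},
        |((gaussianReal a (σ ^ 2).toNNReal) (A : Set ℝ)).toReal
          - ((gaussianReal b (σ ^ 2).toNNReal) (A : Set ℝ)).toReal|)
        = ⨆ A : {A : Set ℝ // MeasurableSet A},
        |((gaussianReal b (σ ^ 2).toNNReal) (A : Set ℝ)).toReal
          - ((gaussianReal a (σ ^ 2).toNNReal) (A : Set ℝ)).toReal| :=
          iSup_congr fun A => abs_sub_comm _ _
      _ = erf ((b - a) / (2 * Real.sqrt 2 * σ)) := tv_lt b a hσ h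
  · subst h
    have : Nonempty {A : Set ℝ // MeasurableSet A} := ⟨⟨∅, MeasurableSet.empty⟩⟩
    simp only [sub_self, abs_zero, ciSup_const]
    rw [zero_div, erf, intervalIntegral.integral_same, mul_zero]
  · rw [abs_of_pos (show 0 < a - b by linarith)]
    exact tv_lt a b hσ h
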